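/- (Dual two-weight Hardy inequality.) Let μ and ν be locally finite positive Borel measures on (0,∞). If A := sup_{0<r<∞} ν((0,r]) · μ([r,∞)) < ∞, then for every nonnegative measurable f, ∫₀^∞ ( ∫_{[t,∞)} f dμ )² dν(t) ≤ C·A·∫₀^∞ f² dμ for an absolute constant C. -/

import Mathlib

open MeasureTheory Set
open scoped ENNReal

namespace TwoWeightHardy

/-- The measure of an upward-closed set is controlled by the measures of tails at its points. -/
lemma upper_ray (m : Measure ℝ) {c : ℝ≥0∞} {S : Set ℝ}
    (hup : ∀ ⦃a b : ℝ⦄, a ∈ S → a ≤ b → b ∈ S)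
    (hc : ∀ a ∈ S, m (Ici a) ≤ c) : m S ≤ c := by
  rcases S.eq_empty_or_nonempty with rfl | hne
  · simp
  have key : ∀ b : ℕ → ℝ, (∀ n, b n ∈ S) → S ⊆ ⋃ n, Ici (b n) → m S ≤ c := by
    intro b hbS hsub
    have hdir : Directed (· ⊆ ·) fun n => Ici (b n) := by
      intro i j
      rcases le_total (b i) (b j) with h | h
      · exact ⟨i, subset_rfl, Ici_subset_Ici.2 h⟩
      · exact ⟨j, Ici_subset_Ici.2 h, subset_rfl⟩
    calc m S ≤ m (⋃ n, Ici (b n)) := measure_mono hsub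
      _ = ⨆ n, m (Ici (b n)) := hdir.measure_iUnion
      _ ≤ c := iSup_le fun n => hc _ (hbS n)
  by_cases hbd : BddBelow S
  · by_cases ha : sInf S ∈ S
    · exact le_trans (measure_mono fun x hx => csInf_le hbd hx) (hc _ ha)
    · have hlt : ∀ n : ℕ, ∃ y ∈ S, y < sInf S + 1/(n+1) :=
        fun n => (csInf_lt_iff hbd hne).1 (lt_add_of_pos_right _ (by positivity))
      choose b hbS hblt using hlt
      refine key b hbS fun x hx => ?_
      have hax : sInf S < x := (csInf_le hbd hx).lt_of_ne fun h => ha (h ▸ hx)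
      obtain ⟨n, hn⟩ := exists_nat_one_div_lt (sub_pos.2 hax)
      exact mem_iUnion.2 ⟨n, le_of_lt (lt_of_lt_of_le (hblt n) (by linarith))⟩
  · have hlt : ∀ n : ℕ, ∃ y ∈ S, y < -(n:ℝ) := fun n => not_bddBelow_iff.1 hbd _
    choose b hbS hblt using hlt
    refine key b hbS fun x hx => ?_
    obtain ⟨n, hn⟩ := exists_nat_gt (-x)
    exact mem_iUnion.2 ⟨n, le_of_lt (lt_of_lt_of_le (hblt n) (by linarith))⟩

/-- The measure of a downward-closed (within `(0,∞)`) set is controlled by the measures of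
initial segments at its points. -/
lemma lower_ray (m : Measure ℝ) {c : ℝ≥0∞} {S : Set ℝ}
    (hpos : S ⊆ Ioi 0)
    (hdown : ∀ ⦃a b : ℝ⦄, a ∈ S → 0 < b → b ≤ a → b ∈ S)
    (hc : ∀ a ∈ S, m (Ioc 0 a) ≤ c) : m S ≤ c := by
  rcases S.eq_empty_or_nonempty with rfl | hne
  · simp
  have key : ∀ b : ℕ → ℝ, (∀ n, b n ∈ S) → S ⊆ ⋃ n, Ioc 0 (b n) → m S ≤ c := by
    intro b hbS hsub
    have hdir : Directed (· ⊆ ·) fun n => Ioc (0:ℝ) (b n) := by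
      intro i j
      rcases le_total (b i) (b j) with h | h
      · exact ⟨j, Ioc_subset_Ioc_right h, subset_rfl⟩
      · exact ⟨i, subset_rfl, Ioc_subset_Ioc_right h⟩
    calc m S ≤ m (⋃ n, Ioc 0 (b n)) := measure_mono hsub
      _ = ⨆ n, m (Ioc 0 (b n)) := hdir.measure_iUnion
      _ ≤ c := iSup_le fun n => hc _ (hbS n)
  by_cases hbd : BddAbove S
  · by_cases ha : sSup S ∈ S
    · exact le_trans (measure_mono fun x hx => mem_Ioc.2 ⟨hpos hx, le_csSup hbd hx⟩) (hc _ ha)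
    · have hlt : ∀ n : ℕ, ∃ y ∈ S, sSup S - 1/(n+1) < y :=
        fun n => exists_lt_of_lt_csSup hne (sub_lt_self _ (by positivity))
      choose b hbS hblt using hlt
      refine key b hbS fun x hx => ?_
      have hax : x < sSup S := (le_csSup hbd hx).lt_of_ne fun h => ha (h ▸ hx)
      obtain ⟨n, hn⟩ := exists_nat_one_div_lt (sub_pos.2 hax)
      refine mem_iUnion.2 ⟨n, mem_Ioc.2 ⟨hpos hx, ?_⟩⟩
      have := hblt n
      linarith
  · have hlt : ∀ n : ℕ, ∃ y ∈ S, (n:ℝ) < y := fun n => not_bddAbove_iff.1 hbd _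
    choose b hbS hblt using hlt
    refine key b hbS fun x hx => ?_
    obtain ⟨n, hn⟩ := exists_nat_gt x
    refine mem_iUnion.2 ⟨n, mem_Ioc.2 ⟨hpos hx, ?_⟩⟩
    have := hblt n
    linarith

lemma half_mul_half_le_one (x : ℝ≥0∞) : x ^ (-(1/2:ℝ)) * x ^ (1/2:ℝ) ≤ 1 := by
  rw [ENNReal.rpow_neg]
  rcases eq_or_ne (x ^ (1/2:ℝ)) 0 with h | h
  · simp [h]
  rcases eq_or_ne (x ^ (1/2:ℝ)) ⊤ with h2 | h2
  · simp [h2, h]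
  · rw [ENNReal.inv_mul_cancel h h2]

lemma sq_rpow_half (x : ℝ≥0∞) : (x ^ (1/2:ℝ)) ^ (2:ℕ) = x := by
  rw [← ENNReal.rpow_natCast, ← ENNReal.rpow_mul]
  norm_num

lemma rpow_half_sq (x : ℝ≥0∞) : (x ^ (2:ℕ)) ^ (1/2:ℝ) = x := by
  rw [← ENNReal.rpow_natCast x 2, ← ENNReal.rpow_mul]
  norm_num

lemma rpow_two_eq_pow (y : ℝ≥0∞) : y ^ (2:ℝ) = y ^ (2:ℕ) := by
  rw [← ENNReal.rpow_natCast y 2]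
  norm_num

lemma div_step {x y A : ℝ≥0∞} (hA : A ≠ ⊤) (hx0 : x ≠ 0) (h : y * x ≤ A) :
    y ^ (1/2:ℝ) ≤ A ^ (1/2:ℝ) * x ^ (-(1/2:ℝ)) := by
  rcases eq_or_ne x ⊤ with rfl | hxt
  · have hy : y = 0 := by
      by_contra hy
      rw [ENNReal.mul_top hy] at h
      exact hA (top_le_iff.1 h)
    simp [hy, ENNReal.zero_rpow_of_pos (by norm_num : (0:ℝ) < 1/2)]
  · have h1 : y ^ (1/2:ℝ) * x ^ (1/2:ℝ) ≤ A ^ (1/2:ℝ) := by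
      rw [← ENNReal.mul_rpow_of_nonneg _ _ (by norm_num : (0:ℝ) ≤ 1/2)]
      exact ENNReal.rpow_le_rpow h (by norm_num)
    have hx2 : x ^ (1/2:ℝ) ≠ 0 := by
      simp [ENNReal.rpow_eq_zero_iff, hx0, hxt]
    have hxt2 : x ^ (1/2:ℝ) ≠ ⊤ := ENNReal.rpow_ne_top_of_nonneg (by norm_num) hxt
    rw [ENNReal.rpow_neg, ← div_eq_mul_inv]
    exact (ENNReal.le_div_iff_mul_le (Or.inl hx2) (Or.inl hxt2)).2 h1

/-- Dyadic decomposition bound: if the sublevel sets of `G` relative to `E` have measure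
controlled by the level, then `∫_E G^{-1/2} dm ≤ 4 B^{1/2}` where `G ≤ B` on `E`. -/
lemma dyadic (m : Measure ℝ) {G : ℝ → ℝ≥0∞} (hG : Measurable G) {E : Set ℝ}
    (hE : MeasurableSet E)
    {B : ℝ≥0∞} (hGE : ∀ s ∈ E, G s ≤ B)
    (hlevel : ∀ c : ℝ≥0∞, m {s | s ∈ E ∧ G s ≤ c} ≤ c) :
    ∫⁻ s in E, (G s) ^ (-(1/2:ℝ)) ∂m ≤ 4 * B ^ (1/2:ℝ) := by
  rcases eq_or_ne B ⊤ with rfl | hBt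
  · have h : (4:ℝ≥0∞) * (⊤:ℝ≥0∞) ^ (1/2:ℝ) = ⊤ := by
      rw [ENNReal.top_rpow_of_pos (by norm_num)]
      exact ENNReal.mul_top (by norm_num)
    rw [h]; exact le_top
  rcases eq_or_ne B 0 with rfl | hB0
  · have hE0 : m E = 0 := by
      refine le_antisymm ?_ zero_le
      exact le_trans (measure_mono fun s hs => mem_setOf.2 ⟨hs, hGE s hs⟩) (hlevel 0)
    rw [setLIntegral_measure_zero _ _ hE0]
    exact zero_le
  set D := B ^ (1/2:ℝ) with hD
  have hD0 : D ≠ 0 := by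
    simp [hD, ENNReal.rpow_eq_zero_iff, hB0, hBt]
  have hDt : D ≠ ⊤ := ENNReal.rpow_ne_top_of_nonneg (by norm_num) hBt
  have hDD : D * D = B := by
    have := sq_rpow_half B
    rwa [pow_two] at this
  set Ek : ℕ → Set ℝ := fun k => {s | s ∈ E ∧ G s ≤ B / 4^k ∧ B / 4^(k+1) < G s} with hEk
  have hcover : E ⊆ {s | s ∈ E ∧ G s ≤ 0} ∪ ⋃ k, Ek k := by
    intro s hs
    rcases eq_or_ne (G s) 0 with h0 | h0
    · exact Or.inl ⟨hs, h0.le⟩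
    right
    have hGs_top : G s ≠ ⊤ := (lt_of_le_of_lt (hGE s hs) (lt_top_iff_ne_top.2 hBt)).ne
    obtain ⟨n, hn⟩ := ENNReal.exists_nat_gt (ENNReal.div_lt_top hBt h0).ne
    have hBn : B < (4:ℝ≥0∞)^n * G s := by
      have h1 : B < (n:ℝ≥0∞) * G s :=
        (ENNReal.div_lt_iff (Or.inl h0) (Or.inl hGs_top)).1 hn
      refine lt_of_lt_of_le h1 (mul_le_mul_left ?_ _)
      calc (n:ℝ≥0∞) ≤ ((4^n : ℕ) : ℝ≥0∞) := by
            exact_mod_cast Nat.le_of_lt (Nat.lt_pow_self (n := n) (a := 4) (by norm_num))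
        _ = (4:ℝ≥0∞)^n := by push_cast; ring
    have hQ : ∃ k : ℕ, B / 4^(k+1) < G s := by
      have hle : B / 4^(n+1) ≤ B / 4^n := by
        refine ENNReal.div_le_div le_rfl ?_
        rw [pow_succ]; exact le_mul_of_one_le_right' (by norm_num)
      have hlt : B / 4^n < G s :=
        (ENNReal.div_lt_iff (Or.inl (pow_ne_zero _ (by norm_num)))
          (Or.inl (ENNReal.pow_ne_top (by norm_num)))).2 (by rwa [mul_comm] at hBn)
      exact ⟨n, lt_of_le_of_lt hle hlt⟩
    refine mem_iUnion.2 ⟨Nat.find hQ, hs, ?_, Nat.find_spec hQ⟩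
    rcases Nat.eq_zero_or_pos (Nat.find hQ) with hk0 | hk0
    · rw [hk0]; simpa using hGE s hs
    · obtain ⟨j, hj⟩ := Nat.exists_eq_succ_of_ne_zero hk0.ne'
      rw [hj]
      exact not_lt.1 (Nat.find_min hQ (by omega))
  have hg : ∀ j : ℕ, ∫⁻ s in Ek j, G s ^ (-(1/2:ℝ)) ∂m ≤ 2 * D * 2⁻¹^j := by
    intro j
    have hbound : ∀ s ∈ Ek j, G s ^ (-(1/2:ℝ)) ≤ 2^(j+1) * D⁻¹ := by
      intro s hs
      have h4 : ((2:ℝ≥0∞)^(j+1))^(2:ℕ) = 4^(j+1) := by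
        rw [← pow_mul, mul_comm, pow_mul]
        norm_num
      have h2 : (D / 2^(j+1))^(2:ℕ) = B / 4^(j+1) := by
        rw [div_eq_mul_inv, mul_pow, ← ENNReal.inv_pow, h4, ← div_eq_mul_inv, pow_two, hDD]
      have h1 : D / 2^(j+1) ≤ G s ^ (1/2:ℝ) := by
        calc D / 2^(j+1) = ((D / 2^(j+1))^(2:ℕ)) ^ (1/2:ℝ) := (rpow_half_sq _).symm
          _ = (B / 4^(j+1)) ^ (1/2:ℝ) := by rw [h2]
          _ ≤ G s ^ (1/2:ℝ) := ENNReal.rpow_le_rpow hs.2.2.le (by norm_num)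
      rw [ENNReal.rpow_neg]
      calc (G s ^ (1/2:ℝ))⁻¹ ≤ (D / 2^(j+1))⁻¹ := ENNReal.inv_le_inv.2 h1
        _ = 2^(j+1) * D⁻¹ := by
            rw [ENNReal.inv_div (Or.inr hDt) (Or.inr hD0), div_eq_mul_inv]
    have halg : 2^(j+1) * D⁻¹ * (B / 4^j) = 2 * D * 2⁻¹^j := by
      have h4j : (4:ℝ≥0∞)^j = 2^j * 2^j := by
        rw [← mul_pow]; norm_num
      have h2j0 : ((2:ℝ≥0∞)^j) ≠ 0 := pow_ne_zero _ (by norm_num)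
      have h2jt : ((2:ℝ≥0∞)^j) ≠ ⊤ := ENNReal.pow_ne_top (by norm_num)
      rw [div_eq_mul_inv, h4j, ENNReal.mul_inv (Or.inl h2j0) (Or.inl h2jt), ← hDD]
      rw [ENNReal.inv_pow]
      calc 2^(j+1) * D⁻¹ * (D * D * ((2:ℝ≥0∞)⁻¹^j * 2⁻¹^j))
          = (2^(j+1) * 2⁻¹^j) * (D⁻¹ * D) * (D * 2⁻¹^j) := by ring
        _ = (2^(j+1) * 2⁻¹^j) * (D * 2⁻¹^j) := by rw [ENNReal.inv_mul_cancel hD0 hDt, mul_one]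
        _ = (2^j * 2⁻¹^j) * (2 * D * 2⁻¹^j) := by ring
        _ = 2 * D * 2⁻¹^j := by
            rw [← mul_pow, ENNReal.mul_inv_cancel (by norm_num) (by norm_num), one_pow, one_mul]
    calc ∫⁻ s in Ek j, G s ^ (-(1/2:ℝ)) ∂m ≤ ∫⁻ _ in Ek j, 2^(j+1) * D⁻¹ ∂m :=
        setLIntegral_mono measurable_const hbound
      _ = 2^(j+1) * D⁻¹ * m (Ek j) := setLIntegral_const _ _
      _ ≤ 2^(j+1) * D⁻¹ * (B / 4^j) := by
          refine mul_le_mul_right (le_trans (measure_mono fun s hs => ?_) (hlevel (B / 4^j))) _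
          exact mem_setOf.2 ⟨hs.1, hs.2.1⟩
      _ = 2 * D * 2⁻¹^j := halg
  calc ∫⁻ s in E, G s ^ (-(1/2:ℝ)) ∂m
      ≤ ∫⁻ s in {s | s ∈ E ∧ G s ≤ 0} ∪ ⋃ k, Ek k, G s ^ (-(1/2:ℝ)) ∂m :=
        lintegral_mono_set hcover
    _ ≤ (∫⁻ s in {s | s ∈ E ∧ G s ≤ 0}, G s ^ (-(1/2:ℝ)) ∂m)
        + ∫⁻ s in ⋃ k, Ek k, G s ^ (-(1/2:ℝ)) ∂m := lintegral_union_le _ _ _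
    _ ≤ 0 + ∑' j, ∫⁻ s in Ek j, G s ^ (-(1/2:ℝ)) ∂m := by
        refine add_le_add ?_ (lintegral_iUnion_le _ _)
        rw [setLIntegral_measure_zero _ _ (le_antisymm (by simpa using hlevel 0) zero_le)]
    _ ≤ 0 + ∑' j, 2 * D * 2⁻¹^j := by
        exact add_le_add_right (ENNReal.tsum_le_tsum hg) 0
    _ = 2 * D * 2 := by
        rw [zero_add, ENNReal.tsum_mul_left, ENNReal.tsum_geometric,
          ENNReal.one_sub_inv_two, inv_inv]
    _ = 4 * D := by ring

/-- Weighted Cauchy–Schwarz for the tail integral. -/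
lemma cauchy_schwarz (μ : Measure ℝ) {f : ℝ → ℝ≥0∞} (hf : Measurable f) (t : ℝ)
    (hft : μ (Ici t) ≠ ⊤) (hnull : μ {s : ℝ | μ (Ici s) = 0} = 0) :
    (∫⁻ s in Ici t, f s ∂μ)^2 ≤
      (∫⁻ s in Ici t, f s^2 * (μ (Ici s)) ^ (1/2:ℝ) ∂μ)
        * (∫⁻ s in Ici t, (μ (Ici s)) ^ (-(1/2:ℝ)) ∂μ) := by
  have hGanti : Antitone fun s : ℝ => μ (Ici s) := fun a b hab =>
    measure_mono (Ici_subset_Ici.2 hab)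
  have hGm : Measurable fun s : ℝ => μ (Ici s) := hGanti.measurable
  set a : ℝ → ℝ≥0∞ := fun s => f s * (μ (Ici s)) ^ (1/4:ℝ) with ha
  set b : ℝ → ℝ≥0∞ := fun s => (μ (Ici s)) ^ (-(1/4):ℝ) with hb
  have ham : Measurable a := hf.mul (hGm.pow_const _)
  have hbm : Measurable b := hGm.pow_const _
  have hcongr : ∫⁻ s in Ici t, f s ∂μ = ∫⁻ s in Ici t, (a * b) s ∂μ := by
    apply lintegral_congr_ae
    have h1 : ∀ᵐ s ∂(μ.restrict (Ici t)), s ∈ Ici t := ae_restrict_mem measurableSet_Ici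
    have h2 : ∀ᵐ s ∂(μ.restrict (Ici t)), μ (Ici s) ≠ 0 :=
      ae_restrict_of_ae (ae_iff.mpr (by simpa [not_not] using hnull))
    filter_upwards [h1, h2] with s hs hs0
    have hst : μ (Ici s) ≠ ⊤ :=
      ((measure_mono (Ici_subset_Ici.2 hs)).trans_lt (lt_top_iff_ne_top.2 hft)).ne
    have hone : (μ (Ici s)) ^ (1/4:ℝ) * (μ (Ici s)) ^ (-(1/4):ℝ) = 1 := by
      rw [← ENNReal.rpow_add _ _ hs0 hst]
      norm_num
    show f s = a s * b s
    rw [ha, hb]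
    dsimp only
    rw [mul_assoc, hone, mul_one]
  have hpq : Real.HolderConjugate 2 2 := ⟨by norm_num, by norm_num, by norm_num⟩
  have hholder := ENNReal.lintegral_mul_le_Lp_mul_Lq (μ.restrict (Ici t)) hpq
    ham.aemeasurable hbm.aemeasurable
  have ha2 : ∀ s : ℝ, a s ^ (2:ℝ) = f s^2 * (μ (Ici s))^(1/2:ℝ) := by
    intro s
    rw [ha]
    dsimp only
    rw [ENNReal.mul_rpow_of_nonneg _ _ (by norm_num : (0:ℝ) ≤ 2), ← ENNReal.rpow_mul,
      rpow_two_eq_pow]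
    norm_num
  have hb2 : ∀ s : ℝ, b s ^ (2:ℝ) = (μ (Ici s)) ^ (-(1/2):ℝ) := by
    intro s
    rw [hb]
    dsimp only
    rw [← ENNReal.rpow_mul]
    norm_num
  have key : ∫⁻ s in Ici t, (a * b) s ∂μ ≤
      ((∫⁻ s in Ici t, f s^2 * (μ (Ici s))^(1/2:ℝ) ∂μ) ^ (1/(2:ℝ)))
        * ((∫⁻ s in Ici t, (μ (Ici s))^(-(1/2):ℝ) ∂μ) ^ (1/(2:ℝ))) := by
    simpa only [ha2, hb2] using hholder
  rw [hcongr]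
  calc (∫⁻ s in Ici t, (a * b) s ∂μ)^2
      ≤ (((∫⁻ s in Ici t, f s^2 * (μ (Ici s))^(1/2:ℝ) ∂μ) ^ (1/(2:ℝ)))
        * ((∫⁻ s in Ici t, (μ (Ici s))^(-(1/2):ℝ) ∂μ) ^ (1/(2:ℝ))))^2 :=
        pow_le_pow_left₀ zero_le key 2
    _ = _ := by
        rw [mul_pow, sq_rpow_half, sq_rpow_half]

end TwoWeightHardy

/-- The dual two-weight Hardy inequality on `(0,∞)`. -/
theorem two_weight_dual_hardy :
    ∃ C : ℝ≥0∞, C ≠ ⊤ ∧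
      ∀ (μ ν : Measure ℝ), IsLocallyFiniteMeasure μ → IsLocallyFiniteMeasure ν →
        ∀ A : ℝ≥0∞, (∀ r : ℝ, 0 < r → ν (Ioc 0 r) * μ (Ici r) ≤ A) →
          ∀ f : ℝ → ℝ≥0∞, Measurable f →
            ∫⁻ t in Ioi (0 : ℝ), (∫⁻ s in Ici t, f s ∂μ) ^ 2 ∂ν ≤
              C * A * ∫⁻ s in Ioi (0 : ℝ), (f s) ^ 2 ∂μ := by
  refine ⟨16, by norm_num, ?_⟩
  intro μ ν hμloc hνloc A hA f hf
  haveI := hμloc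
  haveI := hνloc
  have hGμanti : Antitone fun s : ℝ => μ (Ici s) := fun a b hab =>
    measure_mono (Ici_subset_Ici.2 hab)
  have hGμm : Measurable fun s : ℝ => μ (Ici s) := hGμanti.measurable
  have hGνmono : Monotone fun t : ℝ => ν (Ioc 0 t) := fun a b hab =>
    measure_mono (Ioc_subset_Ioc_right hab)
  have hGνm : Measurable fun t : ℝ => ν (Ioc 0 t) := hGνmono.measurable
  have hμnull : μ {s : ℝ | μ (Ici s) = 0} = 0 := by
    refine le_antisymm (TwoWeightHardy.upper_ray μ ?_ fun a ha => ha.le) zero_le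
    intro a b ha hab
    exact le_antisymm (le_trans (measure_mono (Ici_subset_Ici.2 hab)) ha.le) zero_le
  have hνnull : ν {t : ℝ | t ∈ Ioi (0:ℝ) ∧ ν (Ioc 0 t) = 0} = 0 := by
    refine le_antisymm
      (TwoWeightHardy.lower_ray ν (fun t ht => ht.1) ?_ fun a ha => ha.2.le) zero_le
    intro a b ha hb hba
    exact ⟨hb, le_antisymm
      (le_trans (measure_mono (Ioc_subset_Ioc_right hba)) ha.2.le) zero_le⟩
  rcases eq_or_ne A ⊤ with rfl | hAt
  · rcases eq_or_ne (∫⁻ s in Ioi (0:ℝ), f s ^ 2 ∂μ) 0 with h0 | h0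
    · have hf0 : ∀ᵐ s ∂(μ.restrict (Ioi (0:ℝ))), f s = 0 := by
        have h1 := (lintegral_eq_zero_iff (hf.pow_const 2)).1 h0
        filter_upwards [h1] with s hs
        exact (pow_eq_zero_iff two_ne_zero).1 hs
      have hFt : ∀ t ∈ Ioi (0:ℝ), (∫⁻ s in Ici t, f s ∂μ) = 0 := by
        intro t ht
        have hsub : Ici t ⊆ Ioi (0:ℝ) := fun x hx => mem_Ioi.2 (lt_of_lt_of_le ht hx)
        have h2 := ae_restrict_of_ae_restrict_of_subset hsub hf0
        calc ∫⁻ s in Ici t, f s ∂μ = ∫⁻ _ in Ici t, 0 ∂μ := lintegral_congr_ae h2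
          _ = 0 := lintegral_zero
      have hL : ∫⁻ t in Ioi (0:ℝ), (∫⁻ s in Ici t, f s ∂μ) ^ 2 ∂ν = 0 := by
        calc ∫⁻ t in Ioi (0:ℝ), (∫⁻ s in Ici t, f s ∂μ) ^ 2 ∂ν
            = ∫⁻ _ in Ioi (0:ℝ), 0 ∂ν := by
              refine setLIntegral_congr_fun measurableSet_Ioi (fun t ht => ?_)
              rw [hFt t ht]
              simp
          _ = 0 := lintegral_zero
      rw [hL]
      exact zero_le
    · have htop : (16:ℝ≥0∞) * ⊤ * ∫⁻ s in Ioi (0:ℝ), f s ^ 2 ∂μ = ⊤ := by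
        rw [ENNReal.mul_top (by norm_num : (16:ℝ≥0∞) ≠ 0), ENNReal.top_mul h0]
      calc ∫⁻ t in Ioi (0:ℝ), (∫⁻ s in Ici t, f s ∂μ) ^ 2 ∂ν ≤ ⊤ := le_top
        _ = 16 * ⊤ * ∫⁻ s in Ioi (0:ℝ), f s ^ 2 ∂μ := htop.symm
  -- Main case : A ≠ ⊤
  set W : ℝ → ℝ≥0∞ := fun s => (μ (Ici s)) ^ (1/2:ℝ) with hW
  have hWm : Measurable W := hGμm.pow_const _
  set H : ℝ → ℝ≥0∞ := fun t => ∫⁻ s in Ici t, f s ^ 2 * W s ∂μ with hH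
  have hHanti : Antitone H := fun t1 t2 h => lintegral_mono_set (Ici_subset_Ici.2 h)
  have hHm : Measurable H := hHanti.measurable
  have hN1 : ν {t : ℝ | t ∈ Ioi (0:ℝ) ∧ μ (Ici t) = ⊤} = 0 := by
    refine le_antisymm (TwoWeightHardy.lower_ray ν (fun t ht => ht.1) ?_ ?_) zero_le
    · intro a b ha hb hba
      exact ⟨hb, top_le_iff.1 (ha.2 ▸ measure_mono (Ici_subset_Ici.2 hba))⟩
    · intro a ha
      have h1 := hA a ha.1
      rw [ha.2] at h1
      by_contra h2
      rw [ENNReal.mul_top (fun h => h2 (h ▸ le_rfl))] at h1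
      exact hAt (top_le_iff.1 h1)
  -- Step 1 : pointwise (a.e.) Cauchy-Schwarz + dyadic bound
  have step1 : ∫⁻ t in Ioi (0:ℝ), (∫⁻ s in Ici t, f s ∂μ) ^ 2 ∂ν ≤
      ∫⁻ t in Ioi (0:ℝ), 4 * (W t * H t) ∂ν := by
    apply lintegral_mono_ae
    have hae1 : ∀ᵐ t ∂(ν.restrict (Ioi (0:ℝ))), t ∈ Ioi (0:ℝ) :=
      ae_restrict_mem measurableSet_Ioi
    have hae2 : ∀ᵐ t ∂(ν.restrict (Ioi (0:ℝ))), ¬(t ∈ Ioi (0:ℝ) ∧ μ (Ici t) = ⊤) :=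
      ae_restrict_of_ae (ae_iff.mpr (by simpa [not_not] using hN1))
    filter_upwards [hae1, hae2] with t ht htop
    have hμt : μ (Ici t) ≠ ⊤ := fun h => htop ⟨ht, h⟩
    have hCS := TwoWeightHardy.cauchy_schwarz μ hf t hμt hμnull
    have hdy : ∫⁻ s in Ici t, (μ (Ici s)) ^ (-(1/2:ℝ)) ∂μ ≤ 4 * W t := by
      refine TwoWeightHardy.dyadic μ hGμm measurableSet_Ici
        (fun s hs => measure_mono (Ici_subset_Ici.2 hs)) fun c => ?_
      refine TwoWeightHardy.upper_ray μ ?_ fun a ha => ha.2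
      intro a b ha hab
      exact ⟨le_trans ha.1 hab, le_trans (measure_mono (Ici_subset_Ici.2 hab)) ha.2⟩
    calc (∫⁻ s in Ici t, f s ∂μ) ^ 2
        ≤ H t * (∫⁻ s in Ici t, (μ (Ici s)) ^ (-(1/2:ℝ)) ∂μ) := hCS
      _ ≤ H t * (4 * W t) := mul_le_mul_right hdy _
      _ = 4 * (W t * H t) := by ring
  -- Step 2 : Fubini
  set k : ℝ → ℝ → ℝ≥0∞ := fun t s =>
    {q : ℝ × ℝ | q.1 ≤ q.2}.indicator (fun q => W q.1 * (f q.2 ^ 2 * W q.2)) (t, s) with hk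
  have hkm : Measurable (Function.uncurry k) := by
    refine Measurable.indicator ?_ (measurableSet_le measurable_fst measurable_snd)
    exact (hWm.comp measurable_fst).mul
      (((hf.comp measurable_snd).pow_const 2).mul (hWm.comp measurable_snd))
  have swap : ∫⁻ t in Ioi (0:ℝ), W t * H t ∂ν =
      ∫⁻ s in Ioi (0:ℝ), (∫⁻ t in Ioc 0 s, W t ∂ν) * (f s ^ 2 * W s) ∂μ := by
    have h1 : ∀ t ∈ Ioi (0:ℝ), W t * H t = ∫⁻ s in Ioi (0:ℝ), k t s ∂μ := by
      intro t ht
      have hkt : ∀ s, k t s = (Ici t).indicator (fun s' => W t * (f s' ^ 2 * W s')) s := by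
        intro s
        by_cases h : t ≤ s <;> simp [hk, indicator, h, mem_Ici]
      have hsub : Ici t ⊆ Ioi (0:ℝ) := fun x hx => mem_Ioi.2 (lt_of_lt_of_le ht hx)
      rw [lintegral_congr hkt, lintegral_indicator measurableSet_Ici,
        Measure.restrict_restrict measurableSet_Ici, inter_eq_self_of_subset_left hsub,
        lintegral_const_mul _ (f := fun s => f s ^ 2 * W s) ((hf.pow_const 2).mul hWm)]
    have h2 : ∀ s ∈ Ioi (0:ℝ), (∫⁻ t in Ioi (0:ℝ), k t s ∂ν) =
        (∫⁻ t in Ioc 0 s, W t ∂ν) * (f s ^ 2 * W s) := by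
      intro s hs
      have hks : ∀ t, k t s = (Iic s).indicator (fun t' => W t' * (f s ^ 2 * W s)) t := by
        intro t
        by_cases h : t ≤ s <;> simp [hk, indicator, h, mem_Iic]
      rw [lintegral_congr hks, lintegral_indicator measurableSet_Iic,
        Measure.restrict_restrict measurableSet_Iic, inter_comm, Ioi_inter_Iic,
        lintegral_mul_const _ hWm]
    calc ∫⁻ t in Ioi (0:ℝ), W t * H t ∂ν
        = ∫⁻ t in Ioi (0:ℝ), ∫⁻ s in Ioi (0:ℝ), k t s ∂μ ∂ν :=
          setLIntegral_congr_fun measurableSet_Ioi h1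
      _ = ∫⁻ s in Ioi (0:ℝ), ∫⁻ t in Ioi (0:ℝ), k t s ∂ν ∂μ :=
          lintegral_lintegral_swap hkm.aemeasurable
      _ = ∫⁻ s in Ioi (0:ℝ), (∫⁻ t in Ioc 0 s, W t ∂ν) * (f s ^ 2 * W s) ∂μ :=
          setLIntegral_congr_fun measurableSet_Ioi h2
  -- Step 3 : bound the inner integral
  have step4 : ∫⁻ s in Ioi (0:ℝ), (∫⁻ t in Ioc 0 s, W t ∂ν) * (f s ^ 2 * W s) ∂μ ≤
      ∫⁻ s in Ioi (0:ℝ), (4 * A) * f s ^ 2 ∂μ := by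
    apply lintegral_mono_ae
    have hae1 : ∀ᵐ s ∂(μ.restrict (Ioi (0:ℝ))), s ∈ Ioi (0:ℝ) :=
      ae_restrict_mem measurableSet_Ioi
    have hae2 : ∀ᵐ s ∂(μ.restrict (Ioi (0:ℝ))), ¬ μ (Ici s) = 0 :=
      ae_restrict_of_ae (ae_iff.mpr (by simpa [not_not] using hμnull))
    filter_upwards [hae1, hae2] with s hs hμs
    have hinner : (∫⁻ t in Ioc 0 s, W t ∂ν) ≤ 4 * A * (μ (Ici s)) ^ (-(1/2:ℝ)) := by
      have ha : ∫⁻ t in Ioc 0 s, W t ∂ν ≤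
          ∫⁻ t in Ioc 0 s, A ^ (1/2:ℝ) * (ν (Ioc 0 t)) ^ (-(1/2:ℝ)) ∂ν := by
        apply lintegral_mono_ae
        have h1 : ∀ᵐ t ∂(ν.restrict (Ioc 0 s)), t ∈ Ioc 0 s :=
          ae_restrict_mem measurableSet_Ioc
        have h2 : ∀ᵐ t ∂(ν.restrict (Ioc 0 s)), ¬(t ∈ Ioi (0:ℝ) ∧ ν (Ioc 0 t) = 0) :=
          ae_restrict_of_ae (ae_iff.mpr (by simpa [not_not] using hνnull))
        filter_upwards [h1, h2] with t ht htn
        have hν0 : ν (Ioc 0 t) ≠ 0 := fun h => htn ⟨ht.1, h⟩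
        have hmul : μ (Ici t) * ν (Ioc 0 t) ≤ A := by
          rw [mul_comm]; exact hA t ht.1
        exact TwoWeightHardy.div_step hAt hν0 hmul
      have hb : ∫⁻ t in Ioc 0 s, A ^ (1/2:ℝ) * (ν (Ioc 0 t)) ^ (-(1/2:ℝ)) ∂ν =
          A ^ (1/2:ℝ) * ∫⁻ t in Ioc 0 s, (ν (Ioc 0 t)) ^ (-(1/2:ℝ)) ∂ν :=
        lintegral_const_mul _ (hGνm.pow_const _)
      have hc : ∫⁻ t in Ioc 0 s, (ν (Ioc 0 t)) ^ (-(1/2:ℝ)) ∂ν ≤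
          4 * (ν (Ioc 0 s)) ^ (1/2:ℝ) := by
        refine TwoWeightHardy.dyadic ν hGνm measurableSet_Ioc
          (fun t ht => measure_mono (Ioc_subset_Ioc_right ht.2)) fun c => ?_
        refine TwoWeightHardy.lower_ray ν (fun t ht => ht.1.1) ?_ fun a ha => ha.2
        intro a b ha hb0 hba
        exact ⟨⟨hb0, le_trans hba ha.1.2⟩,
          le_trans (measure_mono (Ioc_subset_Ioc_right hba)) ha.2⟩
      have hd : (ν (Ioc 0 s)) ^ (1/2:ℝ) ≤ A ^ (1/2:ℝ) * (μ (Ici s)) ^ (-(1/2:ℝ)) :=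
        TwoWeightHardy.div_step hAt hμs (hA s hs)
      calc ∫⁻ t in Ioc 0 s, W t ∂ν
          ≤ A ^ (1/2:ℝ) * ∫⁻ t in Ioc 0 s, (ν (Ioc 0 t)) ^ (-(1/2:ℝ)) ∂ν := by
            rw [← hb]; exact ha
        _ ≤ A ^ (1/2:ℝ) * (4 * (ν (Ioc 0 s)) ^ (1/2:ℝ)) := mul_le_mul_right hc _
        _ ≤ A ^ (1/2:ℝ) * (4 * (A ^ (1/2:ℝ) * (μ (Ici s)) ^ (-(1/2:ℝ)))) :=
            mul_le_mul_right (mul_le_mul_right hd _) _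
        _ = 4 * (A ^ (1/2:ℝ) * A ^ (1/2:ℝ)) * (μ (Ici s)) ^ (-(1/2:ℝ)) := by ring
        _ = 4 * A * (μ (Ici s)) ^ (-(1/2:ℝ)) := by
            rw [← ENNReal.rpow_add_of_nonneg _ _ (by norm_num) (by norm_num)]
            norm_num
    calc (∫⁻ t in Ioc 0 s, W t ∂ν) * (f s ^ 2 * W s)
        ≤ (4 * A * (μ (Ici s)) ^ (-(1/2:ℝ))) * (f s ^ 2 * W s) :=
          mul_le_mul_left hinner _
      _ = (4 * A) * (f s ^ 2 * ((μ (Ici s)) ^ (-(1/2:ℝ)) * W s)) := by ring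
      _ ≤ (4 * A) * (f s ^ 2 * 1) :=
          mul_le_mul_right (mul_le_mul_right (TwoWeightHardy.half_mul_half_le_one _) _) _
      _ = (4 * A) * f s ^ 2 := by rw [mul_one]
  -- Assemble
  calc ∫⁻ t in Ioi (0:ℝ), (∫⁻ s in Ici t, f s ∂μ) ^ 2 ∂ν
      ≤ ∫⁻ t in Ioi (0:ℝ), 4 * (W t * H t) ∂ν := step1
    _ = 4 * ∫⁻ t in Ioi (0:ℝ), W t * H t ∂ν := lintegral_const_mul _ (hWm.mul hHm)
    _ = 4 * ∫⁻ s in Ioi (0:ℝ), (∫⁻ t in Ioc 0 s, W t ∂ν) * (f s ^ 2 * W s) ∂μ := by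
        rw [swap]
    _ ≤ 4 * ∫⁻ s in Ioi (0:ℝ), (4 * A) * f s ^ 2 ∂μ := mul_le_mul_right step4 _
    _ = 4 * ((4 * A) * ∫⁻ s in Ioi (0:ℝ), f s ^ 2 ∂μ) := by
        rw [lintegral_const_mul _ (hf.pow_const 2)]
    _ = 16 * A * ∫⁻ s in Ioi (0:ℝ), f s ^ 2 ∂μ := by ring
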